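/- arXiv:1411.0409 — 2 statements merged into one kernel-verified Lean document; each statement's English description precedes it below -/
import Mathlib

section
/- Let p be an odd prime, let M = [[A',B'],[C',D']] ∈ Sp₄(ℤ) and let M' ∈ Γ(2,4) be such that N := M·M' lies in Γ₀(p). Write N = [[A,B],[C,D]] in 2×2 blocks, so that C = p·C₀ for an integer matrix C₀, and set N_p := [[A, pB],[C₀, D]]. Then N_p ∈ Sp₄(ℤ). Moreover, N_p and M lie in the same class modulo Γ(2,4) (i.e. N_p·M⁻¹ ∈ Γ(2,4)) whenever p ≡ 1 (mod 4); and when p ≡ 3 (mod 4) the same conclusion holds provided all diagonal entries of A'·ᵗB' and all diagonal entries of C'·ᵗD' are even. -/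
open Matrix

/-- The standard symplectic form matrix `J = [[0, I₂], [-I₂, 0]]` in `2 × 2` blocks. -/
def Jmat : Matrix (Fin 2 ⊕ Fin 2) (Fin 2 ⊕ Fin 2) ℤ :=
  Matrix.fromBlocks 0 1 (-1) 0

/-- A `4 × 4` integer matrix is symplectic (lies in `Sp₄(ℤ)`) if `ᵗγ ⬝ J ⬝ γ = J`. -/
def IsSymplectic (γ : Matrix (Fin 2 ⊕ Fin 2) (Fin 2 ⊕ Fin 2) ℤ) : Prop :=
  γᵀ * Jmat * γ = Jmat

/-- Membership in `Γ(2,4)`: a symplectic matrix congruent to `I₄` mod `2` whose `B` and `C`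
blocks have all diagonal entries divisible by `4`. -/
def InGamma24 (M : Matrix (Fin 2 ⊕ Fin 2) (Fin 2 ⊕ Fin 2) ℤ) : Prop :=
  IsSymplectic M ∧
  (∀ i j, (2 : ℤ) ∣ (M i j - (1 : Matrix (Fin 2 ⊕ Fin 2) (Fin 2 ⊕ Fin 2) ℤ) i j)) ∧
  (∀ i : Fin 2, (4 : ℤ) ∣ M (Sum.inl i) (Sum.inr i)) ∧
  (∀ i : Fin 2, (4 : ℤ) ∣ M (Sum.inr i) (Sum.inl i))

/-- Membership in `Γ₀(p)`: a symplectic matrix whose `C` block is `≡ 0 mod p`. -/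
def InGamma0 (p : ℕ) (M : Matrix (Fin 2 ⊕ Fin 2) (Fin 2 ⊕ Fin 2) ℤ) : Prop :=
  IsSymplectic M ∧ ∀ i j : Fin 2, (p : ℤ) ∣ M (Sum.inr i) (Sum.inl j)

namespace GammaPAux

lemma isSymplectic_mul {P Q : Matrix (Fin 2 ⊕ Fin 2) (Fin 2 ⊕ Fin 2) ℤ}
    (hP : IsSymplectic P) (hQ : IsSymplectic Q) : IsSymplectic (P * Q) := by
  unfold IsSymplectic at *
  calc (P*Q)ᵀ * Jmat * (P*Q) = Qᵀ * (Pᵀ * Jmat * P) * Q := by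
        rw [Matrix.transpose_mul]; noncomm_ring
    _ = Jmat := by rw [hP, hQ]

lemma sympl_inv {A' B' C' D' : Matrix (Fin 2) (Fin 2) ℤ}
    (h : IsSymplectic (Matrix.fromBlocks A' B' C' D')) :
    Matrix.fromBlocks A' B' C' D' * Matrix.fromBlocks D'ᵀ (-B'ᵀ) (-C'ᵀ) A'ᵀ = 1 ∧
    Matrix.fromBlocks D'ᵀ (-B'ᵀ) (-C'ᵀ) A'ᵀ * Matrix.fromBlocks A' B' C' D' = 1 := by
  have hJ : (-Jmat) * Jmat = 1 := by
    simp [Jmat, Matrix.fromBlocks_multiply, ← Matrix.fromBlocks_one, Matrix.fromBlocks_neg]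
  have key : (-Jmat) * ((Matrix.fromBlocks A' B' C' D')ᵀ * Jmat) =
      Matrix.fromBlocks D'ᵀ (-B'ᵀ) (-C'ᵀ) A'ᵀ := by
    simp [Jmat, Matrix.fromBlocks_transpose, Matrix.fromBlocks_multiply, Matrix.fromBlocks_neg]
  have left : Matrix.fromBlocks D'ᵀ (-B'ᵀ) (-C'ᵀ) A'ᵀ * Matrix.fromBlocks A' B' C' D' = 1 := by
    rw [← key]
    calc -Jmat * ((Matrix.fromBlocks A' B' C' D')ᵀ * Jmat) * Matrix.fromBlocks A' B' C' D'
        = -Jmat * ((Matrix.fromBlocks A' B' C' D')ᵀ * Jmat * Matrix.fromBlocks A' B' C' D') := by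
          noncomm_ring
      _ = -Jmat * Jmat := by rw [h]
      _ = 1 := hJ
  exact ⟨mul_eq_one_comm.mpr left, left⟩

lemma sympl_inv_isSympl {A' B' C' D' : Matrix (Fin 2) (Fin 2) ℤ}
    (h : IsSymplectic (Matrix.fromBlocks A' B' C' D')) :
    IsSymplectic (Matrix.fromBlocks D'ᵀ (-B'ᵀ) (-C'ᵀ) A'ᵀ) := by
  obtain ⟨h1, h2⟩ := sympl_inv h
  set M := Matrix.fromBlocks A' B' C' D'
  set Minv := Matrix.fromBlocks D'ᵀ (-B'ᵀ) (-C'ᵀ) A'ᵀ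
  unfold IsSymplectic at *
  calc Minvᵀ * Jmat * Minv = Minvᵀ * (Mᵀ * Jmat * M) * Minv := by rw [h]
    _ = (M * Minv)ᵀ * Jmat * (M * Minv) := by rw [Matrix.transpose_mul]; noncomm_ring
    _ = Jmat := by rw [h1]; simp

lemma sympl_expand {a b c d : Matrix (Fin 2) (Fin 2) ℤ} :
    IsSymplectic (Matrix.fromBlocks a b c d) ↔
      (-(cᵀ*a) + aᵀ*c = 0 ∧ -(cᵀ*b) + aᵀ*d = 1 ∧ -(dᵀ*a) + bᵀ*c = -1 ∧ -(dᵀ*b) + bᵀ*d = 0) := by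
  unfold IsSymplectic Jmat
  rw [Matrix.fromBlocks_transpose, Matrix.fromBlocks_multiply, Matrix.fromBlocks_multiply]
  simp only [Matrix.mul_zero, Matrix.mul_one, Matrix.mul_neg, zero_add, add_zero,
    Matrix.zero_mul, Matrix.neg_mul, neg_mul, neg_add_rev]
  rw [Matrix.fromBlocks_inj]

lemma sympl_blocks {a b c d : Matrix (Fin 2) (Fin 2) ℤ}
    (h : IsSymplectic (Matrix.fromBlocks a b c d)) :
    aᵀ*c = cᵀ*a ∧ bᵀ*d = dᵀ*b ∧ aᵀ*d - cᵀ*b = 1 := by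
  obtain ⟨h1, h2, h3, h4⟩ := sympl_expand.mp h
  refine ⟨?_, ?_, ?_⟩
  · have := h1; rw [neg_add_eq_zero] at this; exact this.symm
  · have := h4; rw [neg_add_eq_zero] at this; exact this.symm
  · rw [← h2]; abel

lemma sympl_of_blocks {a b c d : Matrix (Fin 2) (Fin 2) ℤ}
    (h1 : aᵀ*c = cᵀ*a) (h2 : bᵀ*d = dᵀ*b) (h3 : aᵀ*d - cᵀ*b = 1) :
    IsSymplectic (Matrix.fromBlocks a b c d) := by
  have h4 : dᵀ*a - bᵀ*c = 1 := by
    have := congrArg Matrix.transpose h3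
    simpa [Matrix.transpose_sub, Matrix.transpose_mul] using this
  refine sympl_expand.mpr ⟨?_, ?_, ?_, ?_⟩
  · rw [h1]; abel
  · rw [← h3]; abel
  · rw [← h4]; abel
  · rw [h2]; abel

lemma smul_cancel {n m : Type*} {q : ℤ} (hq : q ≠ 0) {P Q : Matrix n m ℤ}
    (h : q • P = q • Q) : P = Q := by
  ext i j
  have := congrFun (congrFun h i) j
  simp only [Matrix.smul_apply, smul_eq_mul] at this
  exact mul_left_cancel₀ hq this

lemma add_self_mat {n m : Type*} (W : Matrix n m (ZMod 2)) : W + W = 0 := by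
  ext i j
  simp only [Matrix.add_apply, Matrix.zero_apply]
  exact CharTwo.add_self_eq_zero _

lemma neg_mat {n m : Type*} (W : Matrix n m (ZMod 2)) : -W = W := by
  ext i j
  simp only [Matrix.neg_apply]
  exact CharTwo.neg_eq _

lemma symm_diag_zero (U s : Matrix (Fin 2) (Fin 2) (ZMod 2)) (hs : sᵀ = s)
    (hd : ∀ j, s j j = 0) (i : Fin 2) : (U * s * Uᵀ) i i = 0 := by
  have h01 : s 1 0 = s 0 1 := by
    have := congrFun (congrFun hs 0) 1
    simpa using this
  have expand : (U * s * Uᵀ) i i =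
      U i 0 * s 0 0 * U i 0 + U i 0 * s 0 1 * U i 1 +
      U i 1 * s 1 0 * U i 0 + U i 1 * s 1 1 * U i 1 := by
    simp [Matrix.mul_apply, Fin.sum_univ_two]
    ring
  rw [expand, h01, hd 0, hd 1]
  generalize U i 0 = x
  generalize U i 1 = y
  generalize s 0 1 = z
  revert x y z
  decide

lemma pair_diag_zero (U W v : Matrix (Fin 2) (Fin 2) (ZMod 2)) (i : Fin 2) :
    (U * v * Wᵀ) i i + (W * vᵀ * Uᵀ) i i = 0 := by
  have h : W * vᵀ * Uᵀ = (U * v * Wᵀ)ᵀ := by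
    rw [Matrix.transpose_mul, Matrix.transpose_mul, Matrix.transpose_transpose, Matrix.mul_assoc]
  rw [h, Matrix.transpose_apply]
  exact CharTwo.add_self_eq_zero _

noncomputable section
def q2 (P : Matrix (Fin 2) (Fin 2) ℤ) : Matrix (Fin 2) (Fin 2) (ZMod 2) :=
  P.map (Int.castRingHom (ZMod 2))

lemma q2_apply (P : Matrix (Fin 2) (Fin 2) ℤ) (i j : Fin 2) :
    q2 P i j = ((P i j : ℤ) : ZMod 2) := rfl

lemma q2_add (P Q : Matrix (Fin 2) (Fin 2) ℤ) : q2 (P + Q) = q2 P + q2 Q := by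
  ext i j; simp [q2, Matrix.map_apply, Matrix.add_apply]

lemma q2_mul (P Q : Matrix (Fin 2) (Fin 2) ℤ) : q2 (P * Q) = q2 P * q2 Q := by
  ext i j; simp [q2, Matrix.map_apply, Matrix.mul_apply]

lemma q2_neg (P : Matrix (Fin 2) (Fin 2) ℤ) : q2 (-P) = -(q2 P) := by
  ext i j; simp [q2, Matrix.map_apply, Matrix.neg_apply]

lemma q2_tr (P : Matrix (Fin 2) (Fin 2) ℤ) : q2 Pᵀ = (q2 P)ᵀ := by
  ext i j; simp [q2, Matrix.map_apply, Matrix.transpose_apply]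

end

end GammaPAux

open GammaPAux

/-- Let `p` be an odd prime, `M = [[A',B'],[C',D']] ∈ Sp₄(ℤ)`, `M' ∈ Γ(2,4)` with
`N := M·M' = [[A,B],[C,D]] ∈ Γ₀(p)` and `C = p·C₀`. Then `N_p := [[A, pB],[C₀, D]]`
is symplectic; it lies in the same class as `M` modulo `Γ(2,4)` when `p ≡ 1 (mod 4)`,
and also when `p ≡ 3 (mod 4)` provided the diagonal entries of `A'·ᵗB'` and of
`C'·ᵗD'` are all even. -/
theorem gamma_p_same_class (p : ℕ) (hp : p.Prime) (hoddp : p % 2 = 1)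
    (A' B' C' D' : Matrix (Fin 2) (Fin 2) ℤ)
    (hM : IsSymplectic (Matrix.fromBlocks A' B' C' D'))
    (M' : Matrix (Fin 2 ⊕ Fin 2) (Fin 2 ⊕ Fin 2) ℤ) (hM' : InGamma24 M')
    (A B C D C₀ : Matrix (Fin 2) (Fin 2) ℤ)
    (hN : Matrix.fromBlocks A' B' C' D' * M' = Matrix.fromBlocks A B C D)
    (hN0 : InGamma0 p (Matrix.fromBlocks A B C D))
    (hC : C = (p : ℤ) • C₀) :
    IsSymplectic (Matrix.fromBlocks A ((p : ℤ) • B) C₀ D) ∧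
    (p % 4 = 1 →
      ∃ K, InGamma24 K ∧
        Matrix.fromBlocks A ((p : ℤ) • B) C₀ D = K * Matrix.fromBlocks A' B' C' D') ∧
    (p % 4 = 3 → (∀ i, (2 : ℤ) ∣ (A' * B'ᵀ) i i) → (∀ i, (2 : ℤ) ∣ (C' * D'ᵀ) i i) →
      ∃ K, InGamma24 K ∧
        Matrix.fromBlocks A ((p : ℤ) • B) C₀ D = K * Matrix.fromBlocks A' B' C' D') := by
  obtain ⟨hM'sp, hM'2, hM'B, hM'C⟩ := hM'
  obtain ⟨hNsp, -⟩ := hN0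
  have hInv := GammaPAux.sympl_inv hM
  set Mb := Matrix.fromBlocks A' B' C' D' with hMb
  set Minv := Matrix.fromBlocks D'ᵀ (-B'ᵀ) (-C'ᵀ) A'ᵀ with hMinv
  have hpne : (p:ℤ) ≠ 0 := by exact_mod_cast hp.ne_zero
  have hp2 : (2:ℤ) ∣ (p:ℤ) - 1 := by omega
  -- Part 1 : N_p symplectic
  obtain ⟨e1, e2, e3⟩ := GammaPAux.sympl_blocks hNsp
  have part1 : IsSymplectic (Matrix.fromBlocks A ((p : ℤ) • B) C₀ D) := by
    apply GammaPAux.sympl_of_blocks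
    · apply GammaPAux.smul_cancel hpne
      have h := e1
      rw [hC] at h
      simp only [Matrix.mul_smul, Matrix.smul_mul, Matrix.transpose_smul] at h
      exact h
    · simp only [Matrix.mul_smul, Matrix.smul_mul, Matrix.transpose_smul]
      exact congrArg (fun Z => (p:ℤ) • Z) e2
    · have h : Cᵀ * B = C₀ᵀ * ((p:ℤ) • B) := by
        rw [hC]
        simp only [Matrix.transpose_smul, Matrix.smul_mul, Matrix.mul_smul]
      rw [← h]; exact e3
  refine ⟨part1, ?_⟩
  -- the even part X of M'
  obtain ⟨X, hX⟩ : ∃ X, M' = 1 + (2:ℤ) • X := by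
    refine ⟨Matrix.of (fun i j =>
      (M' i j - (1 : Matrix (Fin 2 ⊕ Fin 2) (Fin 2 ⊕ Fin 2) ℤ) i j) / 2), ?_⟩
    ext i j
    have h2 := hM'2 i j
    simp only [Matrix.add_apply, Matrix.smul_apply, smul_eq_mul, Matrix.of_apply]
    omega
  set a := X.toBlocks₁₁ with ha
  set b := X.toBlocks₁₂ with hb
  set c := X.toBlocks₂₁ with hc
  set d := X.toBlocks₂₂ with hd
  have hXb : X = Matrix.fromBlocks a b c d := (Matrix.fromBlocks_toBlocks X).symm
  -- linearized symplectic relation for X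
  have hXJ : Xᵀ * Jmat + Jmat * X + (2:ℤ) • (Xᵀ * Jmat * X) = 0 := by
    have h := hM'sp
    unfold IsSymplectic at h
    rw [hX] at h
    have expand : ((1: Matrix (Fin 2 ⊕ Fin 2) (Fin 2 ⊕ Fin 2) ℤ) + (2:ℤ)•X)ᵀ * Jmat * (1 + (2:ℤ)•X)
        = Jmat + (2:ℤ) • (Xᵀ * Jmat + Jmat * X + (2:ℤ) • (Xᵀ * Jmat * X)) := by
      rw [Matrix.transpose_add, Matrix.transpose_smul, Matrix.transpose_one]
      simp only [add_mul, mul_add, Matrix.smul_mul, Matrix.mul_smul, one_mul, mul_one,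
        smul_add, smul_smul]
      abel
    rw [expand] at h
    have h0 : (2:ℤ) • (Xᵀ * Jmat + Jmat * X + (2:ℤ) • (Xᵀ * Jmat * X))
        = (2:ℤ) • (0 : Matrix (Fin 2 ⊕ Fin 2) (Fin 2 ⊕ Fin 2) ℤ) := by
      rw [smul_zero]
      rwa [add_eq_left] at h
    exact GammaPAux.smul_cancel (by norm_num) h0
  have hEven : ∀ (i j : Fin 2 ⊕ Fin 2), (2:ℤ) ∣ (Xᵀ*Jmat + Jmat*X) i j := by
    intro i j
    rw [eq_neg_of_add_eq_zero_left hXJ]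
    refine ⟨-((Xᵀ*Jmat*X) i j), ?_⟩
    simp only [Matrix.neg_apply, Matrix.smul_apply, smul_eq_mul]
    ring
  have hblocks : Xᵀ*Jmat + Jmat*X
      = Matrix.fromBlocks (c - cᵀ) (aᵀ + d) (-dᵀ - a) (bᵀ - b) := by
    rw [hXb]
    unfold Jmat
    rw [Matrix.fromBlocks_transpose, Matrix.fromBlocks_multiply, Matrix.fromBlocks_multiply,
      Matrix.fromBlocks_add]
    simp only [Matrix.mul_zero, Matrix.mul_one, Matrix.mul_neg, Matrix.zero_mul,
      Matrix.one_mul, Matrix.neg_mul, zero_add, add_zero]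
    rw [Matrix.fromBlocks_inj]
    exact ⟨by abel, by abel, by abel, by abel⟩
  have h_c : ∀ i j : Fin 2, (2:ℤ) ∣ (c i j - c j i) := by
    intro i j
    have h := hEven (Sum.inl i) (Sum.inl j)
    rw [hblocks] at h
    simpa [Matrix.fromBlocks_apply₁₁, Matrix.sub_apply, Matrix.transpose_apply] using h
  have h_d : ∀ i j : Fin 2, (2:ℤ) ∣ (a j i + d i j) := by
    intro i j
    have h := hEven (Sum.inl i) (Sum.inr j)
    rw [hblocks] at h
    simpa [Matrix.fromBlocks_apply₁₂, Matrix.add_apply, Matrix.transpose_apply] using h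
  have h_b : ∀ i j : Fin 2, (2:ℤ) ∣ (b j i - b i j) := by
    intro i j
    have h := hEven (Sum.inr i) (Sum.inr j)
    rw [hblocks] at h
    simpa [Matrix.fromBlocks_apply₂₂, Matrix.sub_apply, Matrix.transpose_apply] using h
  have h_bd : ∀ i : Fin 2, (2:ℤ) ∣ b i i := by
    intro i
    have h4 := hM'B i
    have hv : M' (Sum.inl i) (Sum.inr i) = 2 * b i i := by
      rw [hX, Matrix.add_apply, Matrix.smul_apply, smul_eq_mul,
        Matrix.one_apply_ne (by exact Sum.inl_ne_inr), zero_add, hb]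
      rfl
    rw [hv] at h4
    omega
  have h_cd : ∀ i : Fin 2, (2:ℤ) ∣ c i i := by
    intro i
    have h4 := hM'C i
    have hv : M' (Sum.inr i) (Sum.inl i) = 2 * c i i := by
      rw [hX, Matrix.add_apply, Matrix.smul_apply, smul_eq_mul,
        Matrix.one_apply_ne (by exact Sum.inr_ne_inl), zero_add, hc]
      rfl
    rw [hv] at h4
    omega
  -- ZMod 2 versions
  have hqd : q2 d = (q2 a)ᵀ := by
    ext i j
    have h0 : ((a j i + d i j : ℤ) : ZMod 2) = 0 := by
      rw [ZMod.intCast_zmod_eq_zero_iff_dvd]; exact_mod_cast h_d i j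
    push_cast at h0
    calc q2 d i j = ((d i j : ℤ) : ZMod 2) := rfl
      _ = -((a j i : ℤ) : ZMod 2) := eq_neg_of_add_eq_zero_right h0
      _ = ((a j i : ℤ) : ZMod 2) := CharTwo.neg_eq _
      _ = (q2 a)ᵀ i j := rfl
  have hqb : (q2 b)ᵀ = q2 b := by
    ext i j
    have h0 : ((b j i - b i j : ℤ) : ZMod 2) = 0 := by
      rw [ZMod.intCast_zmod_eq_zero_iff_dvd]; exact_mod_cast h_b i j
    push_cast at h0
    exact sub_eq_zero.mp h0
  have hqc : (q2 c)ᵀ = q2 c := by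
    ext i j
    have h0 : ((c j i - c i j : ℤ) : ZMod 2) = 0 := by
      rw [ZMod.intCast_zmod_eq_zero_iff_dvd]; exact_mod_cast h_c j i
    push_cast at h0
    exact sub_eq_zero.mp h0
  have hqbd : ∀ i, q2 b i i = 0 := by
    intro i
    rw [q2_apply, ZMod.intCast_zmod_eq_zero_iff_dvd]
    exact_mod_cast h_bd i
  have hqcd : ∀ i, q2 c i i = 0 := by
    intro i
    rw [q2_apply, ZMod.intCast_zmod_eq_zero_iff_dvd]
    exact_mod_cast h_cd i
  -- evenness of the diagonal of off-diagonal blocks of Mb * X * Minv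
  set TRmat := (A'*a + B'*c)*(-B'ᵀ) + (A'*b + B'*d)*A'ᵀ with hTRmat
  set BLmat := (C'*a + D'*c)*D'ᵀ + (C'*b + D'*d)*(-C'ᵀ) with hBLmat
  have hTR0 : ∀ i : Fin 2, (2:ℤ) ∣ TRmat i i := by
    intro i
    have e : q2 TRmat = (q2 A' * q2 a + q2 B' * q2 c) * ((q2 B')ᵀ)
        + (q2 A' * q2 b + q2 B' * (q2 a)ᵀ) * (q2 A')ᵀ := by
      rw [hTRmat]
      simp only [q2_add, q2_mul, q2_neg, q2_tr, hqd, GammaPAux.neg_mat]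
    have e2 : q2 TRmat = (q2 A' * q2 a * (q2 B')ᵀ + q2 B' * (q2 a)ᵀ * (q2 A')ᵀ)
        + q2 A' * q2 b * (q2 A')ᵀ + q2 B' * q2 c * (q2 B')ᵀ := by
      rw [e]; noncomm_ring
    have h0 : q2 TRmat i i = 0 := by
      rw [e2, Matrix.add_apply, Matrix.add_apply, Matrix.add_apply,
        GammaPAux.pair_diag_zero, GammaPAux.symm_diag_zero _ _ hqb hqbd,
        GammaPAux.symm_diag_zero _ _ hqc hqcd]
      ring
    rw [q2_apply, ZMod.intCast_zmod_eq_zero_iff_dvd] at h0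
    exact_mod_cast h0
  have hBL0 : ∀ i : Fin 2, (2:ℤ) ∣ BLmat i i := by
    intro i
    have e : q2 BLmat = (q2 C' * q2 a + q2 D' * q2 c) * ((q2 D')ᵀ)
        + (q2 C' * q2 b + q2 D' * (q2 a)ᵀ) * (q2 C')ᵀ := by
      rw [hBLmat]
      simp only [q2_add, q2_mul, q2_neg, q2_tr, hqd, GammaPAux.neg_mat]
    have e2 : q2 BLmat = (q2 C' * q2 a * (q2 D')ᵀ + q2 D' * (q2 a)ᵀ * (q2 C')ᵀ)
        + q2 D' * q2 c * (q2 D')ᵀ + q2 C' * q2 b * (q2 C')ᵀ := by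
      rw [e]; noncomm_ring
    have h0 : q2 BLmat i i = 0 := by
      rw [e2, Matrix.add_apply, Matrix.add_apply, Matrix.add_apply,
        GammaPAux.pair_diag_zero, GammaPAux.symm_diag_zero _ _ hqc hqcd,
        GammaPAux.symm_diag_zero _ _ hqb hqbd]
      ring
    rw [q2_apply, ZMod.intCast_zmod_eq_zero_iff_dvd] at h0
    exact_mod_cast h0
  -- the matrix K
  have hMXMinv : Mb * X * Minv = Matrix.fromBlocks
      ((A'*a + B'*c)*D'ᵀ + (A'*b + B'*d)*(-C'ᵀ)) TRmat BLmat
      ((C'*a + D'*c)*(-B'ᵀ) + (C'*b + D'*d)*A'ᵀ) := by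
    rw [hTRmat, hBLmat, hXb, hMb, hMinv, Matrix.fromBlocks_multiply, Matrix.fromBlocks_multiply]
  have hEbM : Matrix.fromBlocks 0 B (-C₀) 0 * Minv = Matrix.fromBlocks
      (0*D'ᵀ + B*(-C'ᵀ)) (0*(-B'ᵀ) + B*A'ᵀ) ((-C₀)*D'ᵀ + 0*(-C'ᵀ)) ((-C₀)*(-B'ᵀ) + 0*A'ᵀ) := by
    rw [hMinv, Matrix.fromBlocks_multiply]
  have hNp_split : Matrix.fromBlocks A ((p:ℤ)•B) C₀ D
      = Matrix.fromBlocks A B C D + ((p:ℤ)-1) • Matrix.fromBlocks 0 B (-C₀) 0 := by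
    rw [hC, Matrix.fromBlocks_smul, Matrix.fromBlocks_add, Matrix.fromBlocks_inj]
    refine ⟨by rw [smul_zero, add_zero], ?_, ?_, by rw [smul_zero, add_zero]⟩
    · rw [sub_smul, one_smul]; abel
    · rw [smul_neg, sub_smul, one_smul]; abel
  have hNMinv : Matrix.fromBlocks A B C D * Minv = 1 + (2:ℤ)•(Mb*X*Minv) := by
    rw [← hN, hX, mul_add, mul_one, add_mul, hInv.1, Matrix.mul_smul, Matrix.smul_mul]
  have hKsplit : Matrix.fromBlocks A ((p:ℤ)•B) C₀ D * Minv
      = 1 + (2:ℤ)•(Mb*X*Minv) + ((p:ℤ)-1)•(Matrix.fromBlocks 0 B (-C₀) 0 * Minv) := by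
    rw [hNp_split, add_mul, Matrix.smul_mul, hNMinv]
  have hKgoal : Matrix.fromBlocks A ((p:ℤ)•B) C₀ D
      = (1 + (2:ℤ)•(Mb*X*Minv) + ((p:ℤ)-1)•(Matrix.fromBlocks 0 B (-C₀) 0 * Minv)) * Mb := by
    rw [← hKsplit, Matrix.mul_assoc, hInv.2, mul_one]
  set K := 1 + (2:ℤ)•(Mb*X*Minv) + ((p:ℤ)-1)•(Matrix.fromBlocks 0 B (-C₀) 0 * Minv) with hKdef
  have hKsympl : IsSymplectic K := by
    have h1 : IsSymplectic Minv := by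
      rw [hMinv]
      apply GammaPAux.sympl_inv_isSympl
      rw [← hMb]; exact hM
    have h2 := GammaPAux.isSymplectic_mul part1 h1
    rw [hKsplit] at h2
    exact h2
  have hK2 : ∀ i j, (2:ℤ) ∣ (K i j - (1 : Matrix (Fin 2 ⊕ Fin 2) (Fin 2 ⊕ Fin 2) ℤ) i j) := by
    intro i j
    rw [hKdef]
    obtain ⟨m, hm⟩ := hp2
    rw [Matrix.add_apply, Matrix.add_apply, Matrix.smul_apply, Matrix.smul_apply,
      smul_eq_mul, smul_eq_mul, hm]
    exact ⟨(Mb*X*Minv) i j + m * ((Matrix.fromBlocks 0 B (-C₀) 0 * Minv) i j), by ring⟩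
  have hKB : ∀ i : Fin 2, K (Sum.inl i) (Sum.inr i)
      = 2 * TRmat i i + ((p:ℤ)-1) * (B*A'ᵀ) i i := by
    intro i
    rw [hKdef, hMXMinv, hEbM, Matrix.add_apply, Matrix.add_apply, Matrix.smul_apply,
      Matrix.smul_apply, smul_eq_mul, smul_eq_mul,
      Matrix.one_apply_ne (by exact Sum.inl_ne_inr),
      Matrix.fromBlocks_apply₁₂, Matrix.fromBlocks_apply₁₂]
    simp only [Matrix.zero_mul, zero_add]
  have hKC : ∀ i : Fin 2, K (Sum.inr i) (Sum.inl i)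
      = 2 * BLmat i i - ((p:ℤ)-1) * (C₀*D'ᵀ) i i := by
    intro i
    rw [hKdef, hMXMinv, hEbM, Matrix.add_apply, Matrix.add_apply, Matrix.smul_apply,
      Matrix.smul_apply, smul_eq_mul, smul_eq_mul,
      Matrix.one_apply_ne (by exact Sum.inr_ne_inl),
      Matrix.fromBlocks_apply₂₁, Matrix.fromBlocks_apply₂₁, Matrix.zero_mul, add_zero,
      Matrix.neg_mul, Matrix.neg_apply]
    ring
  constructor
  · -- p ≡ 1 mod 4
    intro hp4
    have h4 : (4:ℤ) ∣ (p:ℤ) - 1 := by omega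
    refine ⟨K, ⟨hKsympl, hK2, ?_, ?_⟩, hKgoal⟩
    · intro i
      rw [hKB i]
      obtain ⟨t, ht⟩ := hTR0 i
      exact dvd_add ⟨t, by rw [ht]; ring⟩ (h4.mul_right _)
    · intro i
      rw [hKC i]
      obtain ⟨t, ht⟩ := hBL0 i
      exact dvd_sub ⟨t, by rw [ht]; ring⟩ (h4.mul_right _)
  · -- p ≡ 3 mod 4
    intro hp4 hAB' hCD'
    have hN2 : Matrix.fromBlocks A B C D = Mb + (2:ℤ)•(Mb*X) := by
      rw [← hN, hX, mul_add, mul_one, Matrix.mul_smul]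
    have hqB : q2 B = q2 B' := by
      ext i j
      have h := congrFun (congrFun hN2 (Sum.inl i)) (Sum.inr j)
      rw [Matrix.fromBlocks_apply₁₂, Matrix.add_apply, Matrix.smul_apply, smul_eq_mul,
        hMb, Matrix.fromBlocks_apply₁₂] at h
      rw [q2_apply, q2_apply, h]
      push_cast
      rw [show (2 : ZMod 2) = 0 by decide]
      ring
    have hqC : q2 C₀ = q2 C' := by
      ext i j
      have h := congrFun (congrFun hN2 (Sum.inr i)) (Sum.inl j)
      rw [Matrix.fromBlocks_apply₂₁, Matrix.add_apply, Matrix.smul_apply, smul_eq_mul,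
        hMb, Matrix.fromBlocks_apply₂₁, hC, Matrix.smul_apply, smul_eq_mul] at h
      have hcast := congrArg (fun z : ℤ => ((z : ZMod 2) : ZMod 2)) h
      push_cast at hcast
      rw [show (2 : ZMod 2) = 0 by decide, zero_mul, add_zero] at hcast
      have hpz : ((p:ℕ) : ZMod 2) = 1 := by
        have hmod : ((p % 2 : ℕ) : ZMod 2) = ((p:ℕ) : ZMod 2) := ZMod.natCast_mod p 2
        rw [hoddp] at hmod
        simpa using hmod.symm
      rw [hpz, one_mul] at hcast
      rw [q2_apply, q2_apply, hcast]
    have hBA : ∀ i, (2:ℤ) ∣ (B*A'ᵀ) i i := by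
      intro i
      have h0 : q2 (B*A'ᵀ) i i = 0 := by
        have h1 : q2 (B*A'ᵀ) = (q2 A' * (q2 B')ᵀ)ᵀ := by
          rw [q2_mul, q2_tr, hqB, Matrix.transpose_mul, Matrix.transpose_transpose]
        rw [h1, Matrix.transpose_apply]
        have h2 : q2 A' * (q2 B')ᵀ = q2 (A' * B'ᵀ) := by rw [q2_mul, q2_tr]
        rw [h2, q2_apply, ZMod.intCast_zmod_eq_zero_iff_dvd]
        exact_mod_cast hAB' i
      rw [q2_apply, ZMod.intCast_zmod_eq_zero_iff_dvd] at h0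
      exact_mod_cast h0
    have hCD : ∀ i, (2:ℤ) ∣ (C₀*D'ᵀ) i i := by
      intro i
      have h0 : q2 (C₀*D'ᵀ) i i = 0 := by
        have h1 : q2 (C₀*D'ᵀ) = (q2 D' * (q2 C')ᵀ)ᵀ := by
          rw [q2_mul, q2_tr, hqC, Matrix.transpose_mul, Matrix.transpose_transpose]
        rw [h1, Matrix.transpose_apply]
        have h2 : q2 D' * (q2 C')ᵀ = q2 (D' * C'ᵀ) := by rw [q2_mul, q2_tr]
        have h3 : q2 (D' * C'ᵀ) i i = q2 (C' * D'ᵀ) i i := by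
          have : q2 (D' * C'ᵀ) = (q2 (C' * D'ᵀ))ᵀ := by
            rw [q2_mul, q2_mul, q2_tr, q2_tr, Matrix.transpose_mul, Matrix.transpose_transpose]
          rw [this, Matrix.transpose_apply]
        rw [h2, h3, q2_apply, ZMod.intCast_zmod_eq_zero_iff_dvd]
        exact_mod_cast hCD' i
      rw [q2_apply, ZMod.intCast_zmod_eq_zero_iff_dvd] at h0
      exact_mod_cast h0
    refine ⟨K, ⟨hKsympl, hK2, ?_, ?_⟩, hKgoal⟩
    · intro i
      rw [hKB i]
      obtain ⟨t, ht⟩ := hTR0 i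
      obtain ⟨w, hw⟩ := hBA i
      obtain ⟨m, hm⟩ := hp2
      exact ⟨t + m*w, by rw [ht, hw, hm]; ring⟩
    · intro i
      rw [hKC i]
      obtain ⟨t, ht⟩ := hBL0 i
      obtain ⟨w, hw⟩ := hCD i
      obtain ⟨m, hm⟩ := hp2
      exact ⟨t - m*w, by rw [ht, hw, hm]; ring⟩
end

section
/- For every prime p, the subgroup Γ₀(p) has index p³ + p² + p + 1 in Sp₄(ℤ). -/
open Matrix

/-- The symplectic group `Sp₄(ℤ)`: integer matrices satisfying `ᵗγ ⬝ J ⬝ γ = J`,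
as a subgroup of the general linear group. -/
def Sp4 : Subgroup (Matrix.GeneralLinearGroup (Fin 2 ⊕ Fin 2) ℤ) where
  carrier := {γ | ((γ : Matrix (Fin 2 ⊕ Fin 2) (Fin 2 ⊕ Fin 2) ℤ))ᵀ * Jmat *
      ((γ : Matrix (Fin 2 ⊕ Fin 2) (Fin 2 ⊕ Fin 2) ℤ)) = Jmat}
  one_mem' := by simp
  mul_mem' := by
    intro a b ha hb
    simp only [Set.mem_setOf_eq, Units.val_mul, Matrix.transpose_mul] at *
    calc (↑b)ᵀ * (↑a)ᵀ * Jmat * ((a : Matrix (Fin 2 ⊕ Fin 2) (Fin 2 ⊕ Fin 2) ℤ) * ↑b)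
        = (↑b)ᵀ * ((↑a)ᵀ * Jmat * ↑a) * ↑b := by
          simp only [Matrix.mul_assoc]
      _ = Jmat := by rw [ha, hb]
  inv_mem' := by
    intro a ha
    simp only [Set.mem_setOf_eq] at *
    have h1 : (a : Matrix (Fin 2 ⊕ Fin 2) (Fin 2 ⊕ Fin 2) ℤ) *
        (↑(a⁻¹) : Matrix (Fin 2 ⊕ Fin 2) (Fin 2 ⊕ Fin 2) ℤ) = 1 := by
      rw [← Units.val_mul, mul_inv_cancel, Units.val_one]
    calc (↑(a⁻¹) : Matrix (Fin 2 ⊕ Fin 2) (Fin 2 ⊕ Fin 2) ℤ)ᵀ * Jmat *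
          (↑(a⁻¹) : Matrix (Fin 2 ⊕ Fin 2) (Fin 2 ⊕ Fin 2) ℤ)
        = (↑(a⁻¹) : Matrix (Fin 2 ⊕ Fin 2) (Fin 2 ⊕ Fin 2) ℤ)ᵀ *
            ((↑a)ᵀ * Jmat * ↑a) * ↑(a⁻¹) := by rw [ha]
      _ = ((a : Matrix (Fin 2 ⊕ Fin 2) (Fin 2 ⊕ Fin 2) ℤ) *
            (↑(a⁻¹) : Matrix (Fin 2 ⊕ Fin 2) (Fin 2 ⊕ Fin 2) ℤ))ᵀ * Jmat *
            ((a : Matrix (Fin 2 ⊕ Fin 2) (Fin 2 ⊕ Fin 2) ℤ) *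
            (↑(a⁻¹) : Matrix (Fin 2 ⊕ Fin 2) (Fin 2 ⊕ Fin 2) ℤ)) := by
          rw [Matrix.transpose_mul]
          simp only [Matrix.mul_assoc]
      _ = Jmat := by rw [h1]; simp

/-- The underlying integer matrix of an element of `Sp₄(ℤ)`. -/
def matOf (γ : ↥Sp4) : Matrix (Fin 2 ⊕ Fin 2) (Fin 2 ⊕ Fin 2) ℤ :=
  ((γ : Matrix.GeneralLinearGroup (Fin 2 ⊕ Fin 2) ℤ) :
    Matrix (Fin 2 ⊕ Fin 2) (Fin 2 ⊕ Fin 2) ℤ)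

/-- The inverse of a symplectic matrix is `-J ⬝ ᵗM ⬝ J`. -/
theorem matOf_inv (a : ↥Sp4) : matOf a⁻¹ = -Jmat * (matOf a)ᵀ * Jmat := by
  have hJJ : Jmat * Jmat = -1 := by
    simp only [Jmat, Matrix.fromBlocks_multiply]
    rw [show (-1 : Matrix (Fin 2 ⊕ Fin 2) (Fin 2 ⊕ Fin 2) ℤ) = -fromBlocks 1 0 0 1 by
      rw [Matrix.fromBlocks_one], Matrix.fromBlocks_neg]
    norm_num
  have hsymp : (matOf a)ᵀ * Jmat * matOf a = Jmat := a.2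
  have h : (-Jmat * (matOf a)ᵀ * Jmat) * matOf a = 1 := by
    calc (-Jmat * (matOf a)ᵀ * Jmat) * matOf a
        = -(Jmat * ((matOf a)ᵀ * Jmat * matOf a)) := by
          simp [Matrix.mul_assoc]
      _ = -(Jmat * Jmat) := by rw [hsymp]
      _ = 1 := by rw [hJJ]; simp
  have h2 := Units.inv_eq_of_mul_eq_one_left
    (u := (a : Matrix.GeneralLinearGroup (Fin 2 ⊕ Fin 2) ℤ)) h
  have h3 : matOf a⁻¹ =
      ↑((a : Matrix.GeneralLinearGroup (Fin 2 ⊕ Fin 2) ℤ))⁻¹ := by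
    simp [matOf]
  rw [h3, h2]

/-- The congruence subgroup `Γ₀(p) ⊆ Sp₄(ℤ)`: matrices whose lower-left `2 × 2` block
is `≡ 0 mod p`. -/
def Gamma0 (p : ℕ) : Subgroup ↥Sp4 where
  carrier := {γ | ∀ i j : Fin 2, (p : ℤ) ∣ matOf γ (Sum.inr i) (Sum.inl j)}
  one_mem' := by
    intro i j
    simp [matOf, Matrix.one_apply]
  mul_mem' := by
    intro a b ha hb i j
    have hab : matOf (a * b) = matOf a * matOf b := rfl
    rw [hab, Matrix.mul_apply, Fintype.sum_sum_type]
    exact dvd_add (Finset.dvd_sum fun k _ => (ha i k).mul_right _)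
      (Finset.dvd_sum fun k _ => (hb k j).mul_left _)
  inv_mem' := by
    intro a ha i j
    rw [matOf_inv]
    have hentry : (-Jmat * (matOf a)ᵀ * Jmat) (Sum.inr i) (Sum.inl j) =
        -matOf a (Sum.inr j) (Sum.inl i) := by
      simp [Jmat, Matrix.mul_apply, Fintype.sum_sum_type, Matrix.fromBlocks,
        Matrix.one_apply, Finset.sum_ite_eq, Finset.mul_sum]
    rw [hentry]
    exact (ha j i).neg_right


/-! ### Auxiliary development for the index computation -/

lemma Jmat_mul_Jmat : Jmat * Jmat = -1 := by
  simp only [Jmat, Matrix.fromBlocks_multiply]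
  rw [show (-1 : Matrix (Fin 2 ⊕ Fin 2) (Fin 2 ⊕ Fin 2) ℤ) = -fromBlocks 1 0 0 1 by
    rw [Matrix.fromBlocks_one], Matrix.fromBlocks_neg]
  norm_num

lemma sympl_blocks (A B C D : Matrix (Fin 2) (Fin 2) ℤ)
    (h1 : Aᵀ * C = Cᵀ * A) (h2 : Bᵀ * D = Dᵀ * B) (h3 : Aᵀ * D - Cᵀ * B = 1) :
    (Matrix.fromBlocks A B C D)ᵀ * Jmat * Matrix.fromBlocks A B C D = Jmat := by
  have h3' : Dᵀ * A - Bᵀ * C = 1 := by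
    have := congrArg Matrix.transpose h3
    simpa [Matrix.transpose_sub, Matrix.transpose_mul] using this
  rw [Matrix.fromBlocks_transpose, Jmat, Matrix.fromBlocks_multiply, Matrix.fromBlocks_multiply]
  simp only [Matrix.mul_zero, Matrix.mul_one, Matrix.mul_neg,
    mul_zero, mul_one, mul_neg, zero_add, add_zero]
  have e1 : -Cᵀ * A + Aᵀ * C = 0 := by rw [Matrix.neg_mul, h1]; abel
  have e2 : -Cᵀ * B + Aᵀ * D = 1 := by rw [Matrix.neg_mul, ← h3]; abel
  have e3 : -Dᵀ * A + Bᵀ * C = -1 := by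
    rw [Matrix.neg_mul, show -(Dᵀ * A) + Bᵀ * C = -(Dᵀ * A - Bᵀ * C) by abel, h3']
  have e4 : -Dᵀ * B + Bᵀ * D = 0 := by rw [Matrix.neg_mul, h2]; abel
  rw [e1, e2, e3, e4]

/-- Build an element of `Sp4` from an integer matrix satisfying the symplectic relation. -/
def mkSp (M : Matrix (Fin 2 ⊕ Fin 2) (Fin 2 ⊕ Fin 2) ℤ)
    (h : Mᵀ * Jmat * M = Jmat) : ↥Sp4 := by
  have hinv : (-Jmat * Mᵀ * Jmat) * M = 1 := by
    calc (-Jmat * Mᵀ * Jmat) * M = -(Jmat * (Mᵀ * Jmat * M)) := by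
          simp [Matrix.mul_assoc]
      _ = -(Jmat * Jmat) := by rw [h]
      _ = 1 := by rw [Jmat_mul_Jmat]; simp
  exact ⟨⟨M, -Jmat * Mᵀ * Jmat, mul_eq_one_comm.mp hinv, hinv⟩, h⟩

lemma matOf_mkSp (M : Matrix (Fin 2 ⊕ Fin 2) (Fin 2 ⊕ Fin 2) ℤ)
    (h : Mᵀ * Jmat * M = Jmat) : matOf (mkSp M h) = M := rfl

lemma Gamma0_mem (p : ℕ) (γ : ↥Sp4) :
    γ ∈ Gamma0 p ↔ ∀ i j : Fin 2, (p : ℤ) ∣ matOf γ (Sum.inr i) (Sum.inl j) := Iff.rfl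

lemma Sp4_rel (γ : ↥Sp4) : (matOf γ)ᵀ * Jmat * matOf γ = Jmat := γ.2

section Red
variable (p : ℕ)

/-- reduction mod `p` of the matrix of an `Sp4` element -/
def red (γ : ↥Sp4) : Matrix (Fin 2 ⊕ Fin 2) (Fin 2 ⊕ Fin 2) (ZMod p) :=
  (matOf γ).map (Int.cast)

lemma matOf_mul (γ δ : ↥Sp4) : matOf (γ * δ) = matOf γ * matOf δ := rfl

lemma red_mul (γ δ : ↥Sp4) : red p (γ * δ) = red p γ * red p δ := by
  simp only [red, matOf_mul]
  exact Matrix.map_mul (f := Int.castRingHom (ZMod p))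

/-- `red` as values of a unit -/
def redU (γ : ↥Sp4) : (Matrix (Fin 2 ⊕ Fin 2) (Fin 2 ⊕ Fin 2) (ZMod p))ˣ :=
  Units.map (RingHom.mapMatrix (Int.castRingHom (ZMod p))).toMonoidHom
    (γ : Matrix.GeneralLinearGroup (Fin 2 ⊕ Fin 2) ℤ)

lemma redU_val (γ : ↥Sp4) :
    (redU p γ : Matrix (Fin 2 ⊕ Fin 2) (Fin 2 ⊕ Fin 2) (ZMod p)) = red p γ := rfl

/-- first two columns of the reduction -/
def toP (γ : ↥Sp4) : Matrix (Fin 2 ⊕ Fin 2) (Fin 2) (ZMod p) :=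
  Matrix.of fun i j => ((matOf γ i (Sum.inl j) : ℤ) : ZMod p)

lemma key_iff (γ δ : ↥Sp4) :
    γ⁻¹ * δ ∈ Gamma0 p ↔ ∃ g : Matrix (Fin 2) (Fin 2) (ZMod p), toP p δ = toP p γ * g := by
  set u := γ⁻¹ * δ with hu
  have hδ : δ = γ * u := by rw [hu, ← mul_assoc, mul_inv_cancel, one_mul]
  constructor
  · intro h
    refine ⟨Matrix.of fun a b => ((matOf u (Sum.inl a) (Sum.inl b) : ℤ) : ZMod p), ?_⟩
    ext i j
    rw [hδ]
    simp only [toP, Matrix.of_apply, matOf_mul, Matrix.mul_apply, Fintype.sum_sum_type]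
    push_cast
    have hz : ∀ b : Fin 2, ((matOf u (Sum.inr b) (Sum.inl j) : ℤ) : ZMod p) = 0 := fun b =>
      (ZMod.intCast_zmod_eq_zero_iff_dvd _ p).mpr ((Gamma0_mem p u).mp h b j)
    simp [hz]
  · rintro ⟨g, hg⟩
    have h1 : toP p δ = red p γ * toP p u := by
      ext i j
      rw [hδ]
      simp only [toP, red, Matrix.of_apply, matOf_mul, Matrix.mul_apply, Matrix.map_apply]
      push_cast
      rfl
    have h2 : toP p γ * g = red p γ * (Matrix.of fun i j =>
        Sum.elim (fun a => g a j) (fun _ => (0 : ZMod p)) i : Matrix (Fin 2 ⊕ Fin 2) (Fin 2) (ZMod p)) := by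
      ext i j
      simp only [toP, red, Matrix.of_apply, Matrix.mul_apply, Fintype.sum_sum_type,
        Matrix.map_apply, Sum.elim_inl, Sum.elim_inr]
      simp
    have h3 : toP p u = Matrix.of fun i j =>
        Sum.elim (fun a => g a j) (fun _ => (0 : ZMod p)) i := by
      have h := h1.symm.trans (hg.trans h2)
      have hinv : ((redU p γ).val)⁻¹ * red p γ = 1 := by
        rw [← redU_val, ← Matrix.coe_units_inv, Units.inv_mul]
      have hcancel := congrArg
        (fun M : Matrix (Fin 2 ⊕ Fin 2) (Fin 2) (ZMod p) => ((redU p γ)⁻¹).val * M) h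
      rw [← Matrix.mul_assoc, ← Matrix.mul_assoc, Matrix.coe_units_inv, hinv, Matrix.one_mul,
        Matrix.one_mul] at hcancel
      exact hcancel
    rw [Gamma0_mem]
    intro i j
    have := congrFun (congrFun h3 (Sum.inr i)) j
    simpa [toP, ZMod.intCast_zmod_eq_zero_iff_dvd] using this

/-- vertical stack of two 2×2 matrices into a 4×2 matrix -/
def stk (A C : Matrix (Fin 2) (Fin 2) (ZMod p)) : Matrix (Fin 2 ⊕ Fin 2) (Fin 2) (ZMod p) :=
  Matrix.of fun i j => Sum.elim (fun a => A a j) (fun a => C a j) i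

lemma stk_mul (A C : Matrix (Fin 2) (Fin 2) (ZMod p)) (g : Matrix (Fin 2) (Fin 2) (ZMod p)) :
    stk p A C * g = stk p (A * g) (C * g) := by
  ext i j
  rcases i with a | a <;> simp [stk, Matrix.mul_apply]

lemma stk_inj {A C A' C' : Matrix (Fin 2) (Fin 2) (ZMod p)} (h : stk p A C = stk p A' C') :
    A = A' ∧ C = C' := by
  constructor <;> ext a j
  · exact congrFun (congrFun h (Sum.inl a)) j
  · exact congrFun (congrFun h (Sum.inr a)) j

lemma sym_of_symplectic (M : Matrix (Fin 2 ⊕ Fin 2) (Fin 2 ⊕ Fin 2) (ZMod p))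
    (h : Mᵀ * (Jmat.map (Int.cast : ℤ → ZMod p)) * M = Jmat.map (Int.cast : ℤ → ZMod p))
    (A C : Matrix (Fin 2) (Fin 2) (ZMod p))
    (hA : ∀ a b, A a b = M (Sum.inl a) (Sum.inl b))
    (hC : ∀ a b, C a b = M (Sum.inr a) (Sum.inl b)) :
    Aᵀ * C = Cᵀ * A := by
  ext a b
  have := congrFun (congrFun h (Sum.inl a)) (Sum.inl b)
  simp only [Matrix.mul_apply, Fintype.sum_sum_type, Matrix.transpose_apply, Jmat,
    Matrix.map_apply, Matrix.fromBlocks_apply₁₁, Matrix.fromBlocks_apply₁₂,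
    Matrix.fromBlocks_apply₂₁, Matrix.fromBlocks_apply₂₂, Matrix.one_apply,
    Matrix.zero_apply, Matrix.neg_apply, Fin.sum_univ_two] at this ⊢
  simp only [hA, hC]
  push_cast at this
  ring_nf at this ⊢
  linear_combination this

lemma indep_of_unit (M : (Matrix (Fin 2 ⊕ Fin 2) (Fin 2 ⊕ Fin 2) (ZMod p))ˣ)
    (P : Matrix (Fin 2 ⊕ Fin 2) (Fin 2) (ZMod p))
    (hP : ∀ i j, P i j = (M : Matrix (Fin 2 ⊕ Fin 2) (Fin 2 ⊕ Fin 2) (ZMod p)) i (Sum.inl j))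
    (v : Fin 2 → ZMod p) (hv : P.mulVec v = 0) : v = 0 := by
  set x : (Fin 2 ⊕ Fin 2) → ZMod p := Sum.elim v 0 with hx
  have h1 : (M : Matrix (Fin 2 ⊕ Fin 2) (Fin 2 ⊕ Fin 2) (ZMod p)).mulVec x = 0 := by
    ext i
    have := congrFun hv i
    simp only [Matrix.mulVec, dotProduct, Fintype.sum_sum_type, hx, Sum.elim_inl,
      Sum.elim_inr, mul_zero, Finset.sum_const_zero, add_zero, Pi.zero_apply] at this ⊢
    rw [← this]
    exact Finset.sum_congr rfl fun a _ => by rw [hP]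
  have h2 : x = 0 := by
    have := congrArg (fun y =>
      ((M⁻¹ : _) : Matrix (Fin 2 ⊕ Fin 2) (Fin 2 ⊕ Fin 2) (ZMod p)).mulVec y) h1
    simpa [Matrix.mulVec_mulVec, ← Units.val_mul] using this
  ext a
  exact congrFun h2 (Sum.inl a)

end Red
section NF
variable (p : ℕ) [Fact p.Prime]

/-- index type for coset representatives -/
abbrev Idx : Type :=
  (ZMod p × ZMod p × ZMod p) ⊕ ((ZMod p × ZMod p) ⊕ ((ZMod p) ⊕ Unit))

/-- top block of normal form -/
def normA : Idx p → Matrix (Fin 2) (Fin 2) (ZMod p)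
  | Sum.inl _ => 1
  | Sum.inr (Sum.inl (l, _)) => !![0, -l; 0, 1]
  | Sum.inr (Sum.inr (Sum.inl _)) => !![1, 0; 0, 0]
  | Sum.inr (Sum.inr (Sum.inr _)) => 0

/-- bottom block of normal form -/
def normC : Idx p → Matrix (Fin 2) (Fin 2) (ZMod p)
  | Sum.inl (a, b, c) => !![a, b; b, c]
  | Sum.inr (Sum.inl (l, t)) => !![1, 0; l, t]
  | Sum.inr (Sum.inr (Sum.inl t)) => !![t, 0; 0, 1]
  | Sum.inr (Sum.inr (Sum.inr _)) => 1

lemma norm_inj (i j : Idx p) (g : Matrix (Fin 2) (Fin 2) (ZMod p))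
    (h1 : normA p j = normA p i * g) (h2 : normC p j = normC p i * g) : i = j := by
  obtain ⟨a, b, c⟩ | ⟨l, t⟩ | t | u := i <;>
    obtain ⟨a', b', c'⟩ | ⟨l', t'⟩ | t' | u' := j <;>
    simp only [normA, normC] at h1 h2
  -- F1 F1
  · rw [one_mul] at h1; subst h1; rw [mul_one] at h2
    have e1 := congrFun (congrFun h2 0) 0
    have e2 := congrFun (congrFun h2 0) 1
    have e3 := congrFun (congrFun h2 1) 1
    simp at e1 e2 e3
    rw [e1, e2, e3]
  -- F1 F2
  · rw [one_mul] at h1; subst h1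
    have e := congrFun (congrFun h2 0) 0
    simp [Matrix.mul_apply, Fin.sum_univ_two] at e
  -- F1 F3
  · rw [one_mul] at h1; subst h1
    have e := congrFun (congrFun h2 1) 1
    simp [Matrix.mul_apply, Fin.sum_univ_two] at e
  -- F1 F4
  · rw [one_mul] at h1; subst h1
    have e := congrFun (congrFun h2 0) 0
    simp [Matrix.mul_apply, Fin.sum_univ_two] at e
  -- F2 F1
  · exfalso
    have e1 := congrFun (congrFun h1 0) 0
    have e2 := congrFun (congrFun h1 1) 0
    simp [Matrix.mul_apply, Fin.sum_univ_two] at e1 e2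
    rw [← e2] at e1; simp at e1
  -- F2 F2
  · have e10 := congrFun (congrFun h1 1) 0
    have e11 := congrFun (congrFun h1 1) 1
    have e01 := congrFun (congrFun h1 0) 1
    have f00 := congrFun (congrFun h2 0) 0
    have f01 := congrFun (congrFun h2 0) 1
    have f11 := congrFun (congrFun h2 1) 1
    simp [Matrix.mul_apply, Fin.sum_univ_two] at e10 e11 e01 f00 f01 f11
    have hl : l' = l := by rw [e01, ← e11, mul_one]
    have ht : t' = t := by rw [f11, ← f01, ← e11]; ring
    rw [hl, ht]
  -- F2 F3
  · exfalso
    have e10 := congrFun (congrFun h1 1) 0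
    have e00 := congrFun (congrFun h1 0) 0
    simp [Matrix.mul_apply, Fin.sum_univ_two] at e10 e00
    rw [← e10] at e00; simp at e00
  -- F2 F4
  · exfalso
    have e11 := congrFun (congrFun h1 1) 1
    have f11 := congrFun (congrFun h2 1) 1
    have f01 := congrFun (congrFun h2 0) 1
    simp [Matrix.mul_apply, Fin.sum_univ_two] at e11 f11 f01
    rw [← e11, ← f01] at f11
    simp at f11
  -- F3 F1
  · exfalso
    have e := congrFun (congrFun h1 1) 1
    simp [Matrix.mul_apply, Fin.sum_univ_two] at e
  -- F3 F2
  · exfalso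
    have e := congrFun (congrFun h1 1) 1
    simp [Matrix.mul_apply, Fin.sum_univ_two] at e
  -- F3 F3
  · have e00 := congrFun (congrFun h1 0) 0
    have e01 := congrFun (congrFun h1 0) 1
    have f00 := congrFun (congrFun h2 0) 0
    simp [Matrix.mul_apply, Fin.sum_univ_two] at e00 e01 f00
    rw [← e00] at f00
    simp at f00
    rw [f00]
  -- F3 F4
  · exfalso
    have e00 := congrFun (congrFun h1 0) 0
    have e10 := congrFun (congrFun h1 1) 0
    have f00 := congrFun (congrFun h2 0) 0
    simp [Matrix.mul_apply, Fin.sum_univ_two] at e00 e10 f00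
    rw [← e00] at f00
    simp at f00
  -- F4 F1
  · exfalso
    have e := congrFun (congrFun h1 0) 0
    simp [Matrix.mul_apply, Fin.sum_univ_two] at e
  -- F4 F2
  · exfalso
    have e := congrFun (congrFun h1 1) 1
    simp [Matrix.mul_apply, Fin.sum_univ_two] at e
  -- F4 F3
  · exfalso
    have e := congrFun (congrFun h1 0) 0
    simp [Matrix.mul_apply, Fin.sum_univ_two] at e
  -- F4 F4
  · rfl
end NF

section Helpers
variable {K : Type*} [Field K]
variable {K : Type*} [Field K]

lemma ker2 (M : Matrix (Fin 2) (Fin 2) K) (h : M.det = 0) :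
    ∃ v : Fin 2 → K, v ≠ 0 ∧ M.mulVec v = 0 := by
  rw [Matrix.det_fin_two] at h
  by_cases h1 : (![M 1 1, -(M 1 0)] : Fin 2 → K) = 0
  · by_cases h2 : (![M 0 1, -(M 0 0)] : Fin 2 → K) = 0
    · -- M = 0
      refine ⟨![1, 0], ?_, ?_⟩
      · intro hv
        have := congrFun hv 0
        simp at this
      · have e11 := congrFun h1 0
        have e10 := congrFun h1 1
        have e01 := congrFun h2 0
        have e00 := congrFun h2 1
        simp at e11 e10 e01 e00
        ext i
        fin_cases i <;>
          simp [Matrix.mulVec, dotProduct, Fin.sum_univ_two, e11, e10, e01, e00]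
    · refine ⟨_, h2, ?_⟩
      ext i
      fin_cases i <;>
        simp [Matrix.mulVec, dotProduct, Fin.sum_univ_two] <;> ring_nf <;>
          linear_combination -h
  · refine ⟨_, h1, ?_⟩
    ext i
    fin_cases i <;>
      simp [Matrix.mulVec, dotProduct, Fin.sum_univ_two] <;> ring_nf <;>
        linear_combination h

lemma colinear (v w : Fin 2 → K) (hv : v ≠ 0) (h : v 0 * w 1 - v 1 * w 0 = 0) :
    ∃ c : K, w = c • v := by
  by_cases h0 : v 0 ≠ 0
  · refine ⟨w 0 / v 0, ?_⟩
    ext i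
    fin_cases i
    · simp only [Fin.zero_eta, Fin.mk_one, Pi.smul_apply, smul_eq_mul]
      rw [div_mul_cancel₀ _ h0]
    · simp only [Fin.zero_eta, Fin.mk_one, Pi.smul_apply, smul_eq_mul]
      rw [div_mul_eq_mul_div, eq_div_iff h0]
      linear_combination h
  · push_neg at h0
    have h1 : v 1 ≠ 0 := by
      intro h1
      exact hv (by ext i; fin_cases i <;> simp [h0, h1])
    refine ⟨w 1 / v 1, ?_⟩
    ext i
    fin_cases i
    · simp only [Fin.zero_eta, Fin.mk_one, Pi.smul_apply, smul_eq_mul]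
      rw [div_mul_eq_mul_div, eq_div_iff h1]
      linear_combination -h
    · simp only [Fin.zero_eta, Fin.mk_one, Pi.smul_apply, smul_eq_mul]
      rw [div_mul_cancel₀ _ h1]

lemma mul_cols (M : Matrix (Fin 2) (Fin 2) K) (x y : Fin 2 → K) :
    M * !![x 0, y 0; x 1, y 1] =
      !![(M.mulVec x) 0, (M.mulVec y) 0; (M.mulVec x) 1, (M.mulVec y) 1] := by
  ext i j
  fin_cases i <;> fin_cases j <;>
    simp [Matrix.mul_apply, Matrix.mulVec, dotProduct, Fin.sum_univ_two]

end Helpers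

section Surj
variable (p : ℕ) [Fact p.Prime]

lemma norm_surj (A C : Matrix (Fin 2) (Fin 2) (ZMod p))
    (hsym : Aᵀ * C = Cᵀ * A)
    (hind : ∀ v : Fin 2 → ZMod p, A.mulVec v = 0 → C.mulVec v = 0 → v = 0) :
    ∃ (i : Idx p) (g : Matrix (Fin 2) (Fin 2) (ZMod p)),
      A = normA p i * g ∧ C = normC p i * g := by
  by_cases hA : IsUnit A.det
  · -- F1 : A invertible
    have hAinv : A⁻¹ * A = 1 := Matrix.nonsing_inv_mul A hA
    have hAinv' : A * A⁻¹ = 1 := Matrix.mul_nonsing_inv A hA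
    set S := C * A⁻¹ with hS
    have hSA : S * A = C := by rw [hS, Matrix.mul_assoc, hAinv, Matrix.mul_one]
    have key1 : Aᵀ * S = Cᵀ := by
      rw [hS, ← Matrix.mul_assoc, hsym, Matrix.mul_assoc, hAinv', Matrix.mul_one]
    have key2 : Sᵀ * A = C := by
      have := congrArg Matrix.transpose key1
      rw [Matrix.transpose_mul, Matrix.transpose_transpose] at this
      exact this
    have hsymm : Sᵀ = S := by
      calc Sᵀ = Sᵀ * (A * A⁻¹) := by rw [hAinv', Matrix.mul_one]
        _ = (Sᵀ * A) * A⁻¹ := by rw [Matrix.mul_assoc]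
        _ = C * A⁻¹ := by rw [key2]
    have h10 : S 1 0 = S 0 1 := by
      have := congrFun (congrFun hsymm 0) 1
      simpa using this
    refine ⟨Sum.inl (S 0 0, S 0 1, S 1 1), A, by simp [normA], ?_⟩
    have hE : !![S 0 0, S 0 1; S 0 1, S 1 1] = S := by
      conv_rhs => rw [Matrix.eta_fin_two S]
      rw [h10]
    simp only [normC]
    rw [hE, hSA]
  · have hdet : A.det = 0 := by
      by_contra h
      exact hA (isUnit_iff_ne_zero.mpr h)
    by_cases hA0 : A = 0
    · exact ⟨Sum.inr (Sum.inr (Sum.inr ())), C, by simp [normA, hA0], by simp [normC]⟩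
    · obtain ⟨v, hv, hAv⟩ := ker2 A hdet
      obtain ⟨κ, hκ⟩ : ∃ x, x = C.mulVec v := ⟨_, rfl⟩
      have hκ0 : κ ≠ 0 := fun h => hv (hind v hAv (by rw [← hκ, h]))
      have hw : ∃ w : Fin 2 → ZMod p, A.mulVec w ≠ 0 := by
        by_contra h
        push_neg at h
        apply hA0
        ext i j
        have := congrFun (h (Pi.single j 1)) i
        simpa [Matrix.mulVec_single] using this
      obtain ⟨w, hαne'⟩ := hw
      obtain ⟨α, hα⟩ : ∃ x, x = A.mulVec w := ⟨_, rfl⟩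
      have hαne : α ≠ 0 := by rw [hα]; exact hαne'
      have orth : dotProduct κ α = 0 := by
        rw [hκ, hα, ← Matrix.vecMul_transpose, Matrix.dotProduct_mulVec,
          Matrix.vecMul_vecMul, ← hsym, ← Matrix.vecMul_vecMul,
          Matrix.vecMul_transpose, hAv, Matrix.zero_vecMul, zero_dotProduct]
      have orth' : κ 0 * α 0 + κ 1 * α 1 = 0 := by
        rw [← orth]
        simp [dotProduct, Fin.sum_univ_two]
      by_cases hα1 : α 1 = 0
      · -- F3 family
        have hα0 : α 0 ≠ 0 := by
          intro h0
          exact hαne (by ext i; fin_cases i <;> simp [h0, hα1])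
        have hκ00 : κ 0 = 0 := by
          rw [hα1, mul_zero, add_zero] at orth'
          rcases mul_eq_zero.mp orth' with h | h
          · exact h
          · exact absurd h hα0
        have hκ1 : κ 1 ≠ 0 := by
          intro h1
          exact hκ0 (by ext i; fin_cases i <;> simp [hκ00, h1])
        obtain ⟨v', hv'⟩ : ∃ x, x = (κ 1)⁻¹ • v := ⟨_, rfl⟩
        obtain ⟨w', hw'⟩ : ∃ x, x = (α 0)⁻¹ • w := ⟨_, rfl⟩
        have hAv' : A.mulVec v' = 0 := by rw [hv', Matrix.mulVec_smul, hAv, smul_zero]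
        have hCv' : C.mulVec v' = ![0, 1] := by
          rw [hv', Matrix.mulVec_smul, ← hκ]
          ext i
          fin_cases i <;> simp [hκ00, inv_mul_cancel₀ hκ1]
        have hAw' : A.mulVec w' = ![1, 0] := by
          rw [hw', Matrix.mulVec_smul, ← hα]
          ext i
          fin_cases i <;> simp [hα1, inv_mul_cancel₀ hα0]
        obtain ⟨c, hc⟩ : ∃ x, x = (C.mulVec w') 1 := ⟨_, rfl⟩
        obtain ⟨w'', hw''⟩ : ∃ x, x = w' - c • v' := ⟨_, rfl⟩
        have hAw'' : A.mulVec w'' = ![1, 0] := by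
          rw [hw'', Matrix.mulVec_sub, Matrix.mulVec_smul, hAv', hAw', smul_zero, sub_zero]
        obtain ⟨t, ht⟩ : ∃ x, x = (C.mulVec w'') 0 := ⟨_, rfl⟩
        have hCsub : C.mulVec w'' = C.mulVec w' - c • ![0, 1] := by
          rw [hw'', Matrix.mulVec_sub, Matrix.mulVec_smul, hCv']
        have hCw'' : C.mulVec w'' = ![t, 0] := by
          ext i
          fin_cases i
          · rw [ht]; simp
          · rw [hCsub]; simp [hc]
        obtain ⟨G, hG⟩ : ∃ x, x = !![w'' 0, v' 0; w'' 1, v' 1] := ⟨_, rfl⟩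
        have hAG : A * G = !![1, 0; 0, 0] := by
          rw [hG, mul_cols A w'' v', hAw'', hAv']
          norm_num
        have hCG : C * G = !![t, 0; 0, 1] := by
          rw [hG, mul_cols C w'' v', hCw'', hCv']
          norm_num
        have hv'ne : v' ≠ 0 := by
          intro h
          rw [h, Matrix.mulVec_zero] at hCv'
          have := congrFun hCv' 1
          simp at this
        have hGdet : IsUnit G.det := by
          rw [isUnit_iff_ne_zero]
          intro hdG
          rw [hG, Matrix.det_fin_two] at hdG
          simp at hdG
          have hcol : v' 0 * w'' 1 - v' 1 * w'' 0 = 0 := by linear_combination -hdG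
          obtain ⟨c', hc'⟩ := colinear v' w'' hv'ne hcol
          rw [hc', Matrix.mulVec_smul, hAv', smul_zero] at hAw''
          have := congrFun hAw'' 0
          simp at this
        have hGG : G * G⁻¹ = 1 := Matrix.mul_nonsing_inv G hGdet
        refine ⟨Sum.inr (Sum.inr (Sum.inl t)), G⁻¹, ?_, ?_⟩
        · simp only [normA]
          rw [← hAG, Matrix.mul_assoc, hGG, Matrix.mul_one]
        · simp only [normC]
          rw [← hCG, Matrix.mul_assoc, hGG, Matrix.mul_one]
      · -- F2 family
        obtain ⟨l, hl⟩ : ∃ x, x = -(α 0) * (α 1)⁻¹ := ⟨_, rfl⟩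
        have hκ1 : κ 1 = l * κ 0 := by
          rw [hl]
          field_simp
          linear_combination orth'
        have hκ00 : κ 0 ≠ 0 := by
          intro h0
          exact hκ0 (by ext i; fin_cases i <;> simp [h0, hκ1])
        obtain ⟨v', hv'⟩ : ∃ x, x = (κ 0)⁻¹ • v := ⟨_, rfl⟩
        obtain ⟨w', hw'⟩ : ∃ x, x = (α 1)⁻¹ • w := ⟨_, rfl⟩
        have hAv' : A.mulVec v' = 0 := by rw [hv', Matrix.mulVec_smul, hAv, smul_zero]
        have hCv' : C.mulVec v' = ![1, l] := by
          rw [hv', Matrix.mulVec_smul, ← hκ]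
          ext i
          fin_cases i
          · simp [inv_mul_cancel₀ hκ00]
          · simp [hκ1]
            rw [← mul_assoc, mul_comm _ l, mul_assoc, inv_mul_cancel₀ hκ00, mul_one]
        have hAw' : A.mulVec w' = ![-l, 1] := by
          rw [hw', Matrix.mulVec_smul, ← hα]
          ext i
          fin_cases i
          · simp [hl]
            ring
          · simp [inv_mul_cancel₀ hα1]
        obtain ⟨c, hc⟩ : ∃ x, x = (C.mulVec w') 0 := ⟨_, rfl⟩
        obtain ⟨w'', hw''⟩ : ∃ x, x = w' - c • v' := ⟨_, rfl⟩
        have hAw'' : A.mulVec w'' = ![-l, 1] := by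
          rw [hw'', Matrix.mulVec_sub, Matrix.mulVec_smul, hAv', hAw', smul_zero, sub_zero]
        obtain ⟨t, ht⟩ : ∃ x, x = (C.mulVec w'') 1 := ⟨_, rfl⟩
        have hCsub : C.mulVec w'' = C.mulVec w' - c • ![1, l] := by
          rw [hw'', Matrix.mulVec_sub, Matrix.mulVec_smul, hCv']
        have hCw'' : C.mulVec w'' = ![0, t] := by
          ext i
          fin_cases i
          · rw [hCsub]; simp [hc]
          · rw [ht]; simp
        obtain ⟨G, hG⟩ : ∃ x, x = !![v' 0, w'' 0; v' 1, w'' 1] := ⟨_, rfl⟩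
        have hAG : A * G = !![0, -l; 0, 1] := by
          rw [hG, mul_cols A v' w'', hAw'', hAv']
          norm_num
        have hCG : C * G = !![1, 0; l, t] := by
          rw [hG, mul_cols C v' w'', hCw'', hCv']
          norm_num
        have hv'ne : v' ≠ 0 := by
          intro h
          rw [h, Matrix.mulVec_zero] at hCv'
          have := congrFun hCv' 0
          simp at this
        have hGdet : IsUnit G.det := by
          rw [isUnit_iff_ne_zero]
          intro hdG
          rw [hG, Matrix.det_fin_two] at hdG
          simp at hdG
          have hcol : v' 0 * w'' 1 - v' 1 * w'' 0 = 0 := by linear_combination hdG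
          obtain ⟨c', hc'⟩ := colinear v' w'' hv'ne hcol
          rw [hc', Matrix.mulVec_smul, hAv', smul_zero] at hAw''
          have := congrFun hAw'' 1
          simp at this
        have hGG : G * G⁻¹ = 1 := Matrix.mul_nonsing_inv G hGdet
        refine ⟨Sum.inr (Sum.inl (l, t)), G⁻¹, ?_, ?_⟩
        · simp only [normA]
          rw [← hAG, Matrix.mul_assoc, hGG, Matrix.mul_one]
        · simp only [normC]
          rw [← hCG, Matrix.mul_assoc, hGG, Matrix.mul_one]
end Surj

section Reps
variable (p : ℕ) [Fact p.Prime]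

/-- integer representative matrices -/
def repM : Idx p → Matrix (Fin 2 ⊕ Fin 2) (Fin 2 ⊕ Fin 2) ℤ
  | Sum.inl (a, b, c) =>
      Matrix.fromBlocks 1 0 !![(a.val : ℤ), (b.val : ℤ); (b.val : ℤ), (c.val : ℤ)] 1
  | Sum.inr (Sum.inl (l, t)) =>
      Matrix.fromBlocks !![0, -(l.val : ℤ); 0, 1] !![-1, 0; 0, 0]
        !![1, 0; (l.val : ℤ), (t.val : ℤ)] !![0, 0; 0, 1]
  | Sum.inr (Sum.inr (Sum.inl t)) =>
      Matrix.fromBlocks !![1, 0; 0, 0] !![0, 0; 0, -1] !![(t.val : ℤ), 0; 0, 1] !![1, 0; 0, 0]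
  | Sum.inr (Sum.inr (Sum.inr _)) => Matrix.fromBlocks 0 (-1) 1 0

lemma repM_sympl (i : Idx p) : (repM p i)ᵀ * Jmat * repM p i = Jmat := by
  obtain ⟨a, b, c⟩ | ⟨l, t⟩ | t | u := i <;> simp only [repM] <;>
    apply sympl_blocks <;>
    · ext i j
      fin_cases i <;> fin_cases j <;>
        simp [Matrix.mul_apply, Fin.sum_univ_two, Matrix.one_apply, Matrix.transpose] <;> ring

/-- the coset representatives in `Sp4` -/
def rep (i : Idx p) : ↥Sp4 := mkSp (repM p i) (repM_sympl p i)

lemma toP_rep (i : Idx p) : toP p (rep p i) = stk p (normA p i) (normC p i) := by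
  have hval : ∀ x : ZMod p, (((x.val : ℤ)) : ZMod p) = x := fun x => by
    push_cast
    exact ZMod.natCast_rightInverse x
  obtain ⟨a, b, c⟩ | ⟨l, t⟩ | t | u := i <;>
    · ext i j
      rcases i with a' | a' <;>
        fin_cases a' <;> fin_cases j <;>
          simp [toP, rep, matOf_mkSp, repM, stk, normA, normC, Matrix.one_apply, hval]

end Reps

section Glue
variable (p : ℕ) [Fact p.Prime]

lemma exists_rep (γ : ↥Sp4) :
    ∃ (i : Idx p) (g : Matrix (Fin 2) (Fin 2) (ZMod p)), toP p γ = toP p (rep p i) * g := by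
  have hJ : (red p γ)ᵀ * (Jmat.map (Int.cast : ℤ → ZMod p)) * red p γ =
      Jmat.map (Int.cast : ℤ → ZMod p) := by
    have h0 := Sp4_rel γ
    have h1 := congrArg (fun M : Matrix (Fin 2 ⊕ Fin 2) (Fin 2 ⊕ Fin 2) ℤ =>
      M.map ⇑(Int.castRingHom (ZMod p))) h0
    rw [Matrix.map_mul, Matrix.map_mul, Int.coe_castRingHom, Matrix.transpose_map] at h1
    exact h1
  set A : Matrix (Fin 2) (Fin 2) (ZMod p) := Matrix.of fun a b => toP p γ (Sum.inl a) b with hA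
  set C : Matrix (Fin 2) (Fin 2) (ZMod p) := Matrix.of fun a b => toP p γ (Sum.inr a) b with hC
  have hsplit : toP p γ = stk p A C := by
    ext i j
    rcases i with a | a <;> simp [stk, hA, hC]
  have hsym : Aᵀ * C = Cᵀ * A :=
    sym_of_symplectic p (red p γ) hJ A C (fun a b => rfl) (fun a b => rfl)
  have hind : ∀ v : Fin 2 → ZMod p, A.mulVec v = 0 → C.mulVec v = 0 → v = 0 := by
    intro v hAv hCv
    refine indep_of_unit p (redU p γ) (toP p γ) (fun i j => rfl) v ?_
    ext i
    rcases i with a | a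
    · exact congrFun hAv a
    · exact congrFun hCv a
  obtain ⟨i, g, hA', hC'⟩ := norm_surj p A C hsym hind
  refine ⟨i, g, ?_⟩
  rw [hsplit, toP_rep, stk_mul, hA', hC']

end Glue
/-- `Γ₀(p)` has index `p³ + p² + p + 1` in `Sp₄(ℤ)`. -/
theorem gamma0_index (p : ℕ) (hp : p.Prime) :
    (Gamma0 p).index = p ^ 3 + p ^ 2 + p + 1 := by
  haveI : Fact p.Prime := ⟨hp⟩
  have hbij : Function.Bijective
      (fun i : Idx p => ((rep p i : ↥Sp4) : ↥Sp4 ⧸ Gamma0 p)) := by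
    constructor
    · intro i j hij
      rw [QuotientGroup.eq] at hij
      obtain ⟨g, hg⟩ := (key_iff p (rep p i) (rep p j)).mp hij
      rw [toP_rep, toP_rep, stk_mul] at hg
      obtain ⟨h1, h2⟩ := stk_inj p hg
      exact norm_inj p i j g h1 h2
    · intro q
      induction q using QuotientGroup.induction_on with
      | H γ =>
        obtain ⟨i, g, hg⟩ := exists_rep p γ
        exact ⟨i, (QuotientGroup.eq.mpr ((key_iff p (rep p i) γ).mpr ⟨g, hg⟩)).symm ▸ rfl⟩
  have hcard : Nat.card (↥Sp4 ⧸ Gamma0 p) = Nat.card (Idx p) :=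
    (Nat.card_congr (Equiv.ofBijective _ hbij)).symm
  have hidx : Nat.card (Idx p) = p ^ 3 + p ^ 2 + p + 1 := by
    have hz : Nat.card (ZMod p) = p := Nat.card_zmod p
    simp only [Idx, Nat.card_sum, Nat.card_prod, hz, Nat.card_unique]
    ring
  rw [Subgroup.index, hcard, hidx]
end
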